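/- No mechanism can simultaneously satisfy fairness, strategyproofness, and cut-off nonwastefulness under hereditary M♮-convex set constraints. Concretely, in the market with students S = {s_1, s_2}, colleges C = {c_1, c_2}, college preferences s_2 ≻_{c_1} s_1 and s_1 ≻_{c_2} s_2, and feasible vectors F = {(0,0),(1,0),(0,1)} (regional quota |Y_{c_1}| + |Y_{c_2}| ≤ 1), any mechanism that always outputs a fair and cut-off nonwasteful matching admits a student with a profitable preference misreport. -/
import Mathlib


/-- A student's strict preference over colleges together with the outside
option `none` (being unmatched). -/
structure StudPref (C : Type*) where
  rel : Option C → Option C → Prop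
  irrefl : ∀ a, ¬ rel a a
  trans : ∀ a b c, rel a b → rel b c → rel a c
  total : ∀ a b, a ≠ b → rel a b ∨ rel b a

/-- Colleges' preferences in the counterexample market:
`c₁ : s₂ ≻ s₁` and `c₂ : s₁ ≻ s₂`. -/
def cpref8 (c s s' : Fin 2) : Prop :=
  (c = 0 ∧ s = 1 ∧ s' = 0) ∨ (c = 1 ∧ s = 0 ∧ s' = 1)

/-- Feasibility for the regional quota `|Y_{c₁}| + |Y_{c₂}| ≤ 1`
(feasible vectors `(0,0), (1,0), (0,1)`): at most one student is matched. -/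
def Feas8 (μ : Fin 2 → Option (Fin 2)) : Prop := μ 0 = none ∨ μ 1 = none

/-- Student `s` claims an empty seat of college `c`: `c` is acceptable to `s`,
`s` prefers `c` to her current match, and moving `s` to `c` is feasible. -/
def Claim8 (p : Fin 2 → StudPref (Fin 2)) (μ : Fin 2 → Option (Fin 2))
    (s c : Fin 2) : Prop :=
  (p s).rel (some c) none ∧ (p s).rel (some c) (μ s) ∧
    Feas8 (Function.update μ s (some c))

/-- rank function for `c₁ ≻ c₂ ≻ ∅`. -/
def ra : Option (Fin 2) → ℕ := fun x => match x with
  | none => 2 | some i => if i = 0 then 0 else 1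
/-- rank function for `c₁ ≻ ∅ ≻ c₂`. -/
def rb : Option (Fin 2) → ℕ := fun x => match x with
  | none => 1 | some i => if i = 0 then 0 else 2
/-- rank function for `c₂ ≻ ∅ ≻ c₁`. -/
def rd : Option (Fin 2) → ℕ := fun x => match x with
  | none => 1 | some i => if i = 0 then 2 else 0
/-- rank function for `c₂ ≻ c₁ ≻ ∅`. -/
def re : Option (Fin 2) → ℕ := fun x => match x with
  | none => 2 | some i => if i = 0 then 1 else 0

def mkP (r : Option (Fin 2) → ℕ) (h : ∀ a b : Option (Fin 2), a ≠ b → r a < r b ∨ r b < r a) :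
    StudPref (Fin 2) :=
  ⟨fun x y => r x < r y, fun _ => Nat.lt_irrefl _, fun _ _ _ => Nat.lt_trans, h⟩

def PA : StudPref (Fin 2) := mkP ra (by decide)
def PB : StudPref (Fin 2) := mkP rb (by decide)
def PD : StudPref (Fin 2) := mkP rd (by decide)
def PE : StudPref (Fin 2) := mkP re (by decide)

def q1 : Fin 2 → StudPref (Fin 2) := ![PA, PD]
def q2 : Fin 2 → StudPref (Fin 2) := ![PB, PE]
def q3 : Fin 2 → StudPref (Fin 2) := ![PB, PD]

/-- No mechanism is simultaneously fair, strategyproof and cut-off nonwasteful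
under hereditary M♮-convex set constraints: in the two-student, two-college
market with regional quota 1, any mechanism always producing a feasible, fair
and cut-off nonwasteful matching admits a profitable misreport. -/
theorem stmt8 (M : (Fin 2 → StudPref (Fin 2)) → (Fin 2 → Option (Fin 2)))
    (hfeas : ∀ p, Feas8 (M p))
    (hvalid : ∀ p s c, M p s = some c → (p s).rel (some c) none)
    (hfair : ∀ p s s' c, M p s' = some c → (p s).rel (some c) none →
      (p s).rel (some c) (M p s) → cpref8 c s s' → False)
    (hcutoff : ∀ p s c, Claim8 p (M p) s c →
      ∃ s', s' ≠ s ∧ (p s').rel (some c) (M p s') ∧ cpref8 c s' s ∧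
        ¬ Feas8 (Function.update (M p) s' (some c))) :
    -- some student has a profitable preference misreport
    ∃ (p : Fin 2 → StudPref (Fin 2)) (s : Fin 2) (q : StudPref (Fin 2)),
      (p s).rel (M (Function.update p s q) s) (M p s) := by
  -- Step 1 : M q1 0 = some 0
  have hq10 : q1 0 = PA := rfl
  have hq11 : q1 1 = PD := rfl
  have hP1 : M q1 0 = some 0 := by
    rcases h0 : M q1 0 with _ | c
    · rcases h1 : M q1 1 with _ | c'
      · -- both unmatched : s1 claims c₁
        obtain ⟨s', hne, hrel, hcp, -⟩ := hcutoff q1 0 0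
          ⟨show ra (some 0) < ra none by decide,
           by rw [h0]; exact (show ra (some 0) < ra none by decide),
           Or.inr (by rw [Function.update_of_ne (by decide)]; exact h1)⟩
        rcases hcp with ⟨-, hs, -⟩ | ⟨hc, -, -⟩
        · subst hs; rw [h1] at hrel
          exact absurd hrel (show ¬ rd (some 0) < rd none by decide)
        · exact absurd hc (by decide)
      · fin_cases c'
        · exact absurd (hvalid q1 1 0 h1) (show ¬ rd (some 0) < rd none by decide)
        · exact (hfair q1 0 1 1 h1 (show ra (some 1) < ra none by decide)
            (by rw [h0]; exact (show ra (some 1) < ra none by decide))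
            (Or.inr ⟨rfl, rfl, rfl⟩)).elim
    · fin_cases c
      · rfl
      · -- s1 matched to c₂ : s1 claims c₁
        have h1 : M q1 1 = none := (hfeas q1).resolve_left (by rw [h0]; simp)
        obtain ⟨s', hne, hrel, hcp, -⟩ := hcutoff q1 0 0
          ⟨show ra (some 0) < ra none by decide,
           by rw [h0]; exact (show ra (some 0) < ra (some 1) by decide),
           Or.inr (by rw [Function.update_of_ne (by decide)]; exact h1)⟩
        rcases hcp with ⟨-, hs, -⟩ | ⟨hc, -, -⟩
        · subst hs; rw [h1] at hrel
          exact absurd hrel (show ¬ rd (some 0) < rd none by decide)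
        · exact absurd hc (by decide)
  -- Step 2 : M q2 1 = some 1
  have hP2 : M q2 1 = some 1 := by
    rcases h1 : M q2 1 with _ | c
    · rcases h0 : M q2 0 with _ | c'
      · -- both unmatched : s2 claims c₂
        obtain ⟨s', hne, hrel, hcp, -⟩ := hcutoff q2 1 1
          ⟨show re (some 1) < re none by decide,
           by rw [h1]; exact (show re (some 1) < re none by decide),
           Or.inl (by rw [Function.update_of_ne (by decide)]; exact h0)⟩
        rcases hcp with ⟨hc, -, -⟩ | ⟨-, hs, -⟩
        · exact absurd hc (by decide)
        · subst hs; rw [h0] at hrel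
          exact absurd hrel (show ¬ rb (some 1) < rb none by decide)
      · fin_cases c'
        · exact (hfair q2 1 0 0 h0 (show re (some 0) < re none by decide)
            (by rw [h1]; exact (show re (some 0) < re none by decide))
            (Or.inl ⟨rfl, rfl, rfl⟩)).elim
        · exact absurd (hvalid q2 0 1 h0) (show ¬ rb (some 1) < rb none by decide)
    · fin_cases c
      · -- s2 matched to c₁ : s2 claims c₂
        have h0 : M q2 0 = none := (hfeas q2).resolve_right (by rw [h1]; simp)
        obtain ⟨s', hne, hrel, hcp, -⟩ := hcutoff q2 1 1
          ⟨show re (some 1) < re none by decide,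
           by rw [h1]; exact (show re (some 1) < re (some 0) by decide),
           Or.inl (by rw [Function.update_of_ne (by decide)]; exact h0)⟩
        rcases hcp with ⟨hc, -, -⟩ | ⟨-, hs, -⟩
        · exact absurd hc (by decide)
        · subst hs; rw [h0] at hrel
          exact absurd hrel (show ¬ rb (some 1) < rb none by decide)
      · rfl
  -- Step 3 : deviations at q3
  by_cases h : M q3 0 = some 0
  · have h1 : M q3 1 = none := (hfeas q3).resolve_left (by rw [h]; simp)
    refine ⟨q3, 1, PE, ?_⟩
    have hup : Function.update q3 1 PE = q2 := by
      funext i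
      by_cases hi : i = 1
      · subst hi; rw [Function.update_self]; rfl
      · have h0 : i = 0 := by omega
        subst h0; rw [Function.update_of_ne (by decide)]; rfl
    rw [hup, hP2, h1]
    exact (show rd (some 1) < rd none by decide)
  · refine ⟨q3, 0, PA, ?_⟩
    have hup : Function.update q3 0 PA = q1 := by
      funext i
      by_cases hi : i = 0
      · subst hi; rw [Function.update_self]; rfl
      · have h1 : i = 1 := by omega
        subst h1; rw [Function.update_of_ne (by decide)]; rfl
    rw [hup, hP1]
    show rb (some 0) < rb (M q3 0)
    have : ∀ x : Option (Fin 2), x ≠ some 0 → rb (some 0) < rb x := by decide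
    exact this _ h
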